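/- Let α ∈ ℂ with α ≠ 0. If α ≠ 1 then H^0(Γ; ℂ_α) = 0; if in addition α is not a root of the characteristic polynomial of M, then H^1(Γ; ℂ_α) = 0 and H^2(Γ; ℂ_α) = 0. -/

import Mathlib

/-- Exponent sum of the generator `j` in the word `w` of the free group. -/
def expSum {m : ℕ} (w : FreeGroup (Fin m)) (j : Fin m) : ℤ :=
  Multiplicative.toAdd
    ((FreeGroup.lift fun i => Multiplicative.ofAdd (if i = j then (1 : ℤ) else 0)) w)

/-- The matrix of the map induced by the automorphism `θ` on the abelianization `ℤ^m`
of the free group: `M i j` is the exponent sum of `γ_j` in `θ(γ_i)`. -/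
def abMatrix {m : ℕ} (θ : FreeGroup (Fin m) ≃* FreeGroup (Fin m)) :
    Matrix (Fin m) (Fin m) ℤ :=
  Matrix.of fun i j => expSum (θ (FreeGroup.of i)) j

/-- The semidirect product `Γ = F ⋊_θ ℤ`, in which the generator `τ` of the `ℤ` factor
acts by `θ`. -/
abbrev Gam {m : ℕ} (θ : FreeGroup (Fin m) ≃* FreeGroup (Fin m)) :=
  FreeGroup (Fin m) ⋊[zpowersHom (MulAut (FreeGroup (Fin m))) θ] Multiplicative ℤ

/-- The projection `ψ : Γ → ℤ` onto the `ℤ` factor. -/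
def psi {m : ℕ} {θ : FreeGroup (Fin m) ≃* FreeGroup (Fin m)} (x : Gam θ) : ℤ :=
  Multiplicative.toAdd (SemidirectProduct.rightHom x)

/-! ### Auxiliary lemmas -/

section Aux

open FreeGroup SemidirectProduct

variable {m : ℕ}

lemma expSum_mul (u v : FreeGroup (Fin m)) (j : Fin m) :
    expSum (u * v) j = expSum u j + expSum v j := by
  unfold expSum; rw [_root_.map_mul, toAdd_mul]

lemma expSum_one (j : Fin m) : expSum (1 : FreeGroup (Fin m)) j = 0 := by
  unfold expSum; rw [_root_.map_one]; rfl

lemma expSum_inv (u : FreeGroup (Fin m)) (j : Fin m) : expSum u⁻¹ j = - expSum u j := by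
  unfold expSum; rw [_root_.map_inv, toAdd_inv]

lemma expSum_of (i j : Fin m) : expSum (FreeGroup.of i) j = if i = j then 1 else 0 := by
  unfold expSum; rw [FreeGroup.lift_apply_of]; rfl

/-- Every homomorphism from the free group to `ℂ` (written multiplicatively) is given by the
exponent-sum pairing with its values on generators. -/
lemma hom_eq_expSum_sum (φ : FreeGroup (Fin m) →* Multiplicative ℂ) (w : FreeGroup (Fin m)) :
    Multiplicative.toAdd (φ w)
      = ∑ j, (expSum w j : ℂ) * Multiplicative.toAdd (φ (FreeGroup.of j)) := by
  induction w using FreeGroup.induction_on with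
  | C1 => simp [expSum_one]
  | of i =>
      show Multiplicative.toAdd (φ (FreeGroup.of i))
        = ∑ j, (expSum (FreeGroup.of i) j : ℂ) * Multiplicative.toAdd (φ (FreeGroup.of j))
      have : ∀ j, ((expSum (FreeGroup.of i) j : ℂ))
          = if i = j then (1:ℂ) else 0 := by
        intro j; rw [expSum_of]; split <;> simp
      simp only [this, ite_mul, one_mul, zero_mul]
      rw [Finset.sum_ite_eq]
      simp
  | inv_of i ih =>
      rw [_root_.map_inv, toAdd_inv, ih, ← Finset.sum_neg_distrib]
      refine Finset.sum_congr rfl fun j _ => ?_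
      rw [expSum_inv]
      push_cast
      ring
  | mul u v ihu ihv =>
      rw [_root_.map_mul, toAdd_mul, ihu, ihv, ← Finset.sum_add_distrib]
      refine Finset.sum_congr rfl fun j _ => ?_
      rw [expSum_mul]
      push_cast
      ring

lemma psi_mul {θ : FreeGroup (Fin m) ≃* FreeGroup (Fin m)} (x y : Gam θ) :
    psi (x * y) = psi x + psi y := by
  unfold psi; rw [_root_.map_mul, toAdd_mul]

lemma psi_one {θ : FreeGroup (Fin m) ≃* FreeGroup (Fin m)} :
    psi (1 : Gam θ) = 0 := by
  unfold psi; rw [_root_.map_one]; rfl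

lemma psi_inl {θ : FreeGroup (Fin m) ≃* FreeGroup (Fin m)} (u : FreeGroup (Fin m)) :
    psi (SemidirectProduct.inl u : Gam θ) = 0 := by
  unfold psi; rw [rightHom_inl]; rfl

lemma psi_inr {θ : FreeGroup (Fin m) ≃* FreeGroup (Fin m)} (z : Multiplicative ℤ) :
    psi (SemidirectProduct.inr z : Gam θ) = Multiplicative.toAdd z := by
  unfold psi; rw [rightHom_inr]

end Aux

/-! ### The character `χ` -/

section Chi

variable {m : ℕ} (θ : FreeGroup (Fin m) ≃* FreeGroup (Fin m)) (α : ℂ) (hα : α ≠ 0)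

/-- The character `g ↦ α ^ ψ g` of `Γ`. -/
noncomputable def chiM : Gam θ →* ℂ where
  toFun g := α ^ psi g
  map_one' := by show α ^ psi (1 : Gam θ) = 1; rw [psi_one, zpow_zero]
  map_mul' g h := by show α ^ psi (g * h) = α ^ psi g * α ^ psi h; rw [psi_mul, zpow_add₀ hα]

lemma chiM_apply (g : Gam θ) : chiM θ α hα g = α ^ psi g := rfl

lemma chiM_inl (u : FreeGroup (Fin m)) :
    chiM θ α hα (SemidirectProduct.inl u) = 1 := by
  rw [chiM_apply, psi_inl, zpow_zero]

lemma chiM_inr (z : Multiplicative ℤ) :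
    chiM θ α hα (SemidirectProduct.inr z) = α ^ Multiplicative.toAdd z := by
  rw [chiM_apply, psi_inr]

end Chi

/-! ### The extension group associated to a 2-cocycle -/

section Ext

variable {G : Type} [Group G]

/-- The extension of `G` by `ℂ` determined by a normalized `2`-cocycle `f` (with respect to the
character `χ`). -/
@[ext] structure ExtG (χ : G →* ℂ) (f : G × G → ℂ)
    (hf : ∀ g h j : G, χ g * f (h, j) + f (g, h * j) = f (g * h, j) + f (g, h))
    (hf1 : f (1, 1) = 0) : Type where
  a : ℂ
  g : G

namespace ExtG

variable {χ : G →* ℂ} {f : G × G → ℂ}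
  {hf : ∀ g h j : G, χ g * f (h, j) + f (g, h * j) = f (g * h, j) + f (g, h)}
  {hf1 : f (1, 1) = 0}

lemma f_one_left' {χ : G →* ℂ} {f : G × G → ℂ}
    (hf : ∀ g h j : G, χ g * f (h, j) + f (g, h * j) = f (g * h, j) + f (g, h))
    (hf1 : f (1, 1) = 0) (g : G) : f (1, g) = 0 := by
  have h := hf 1 1 g
  simp only [_root_.map_one, one_mul] at h
  have h2 : f (1, g) = f (1, 1) := by linear_combination h
  rw [h2, hf1]

lemma f_one_right' {χ : G →* ℂ} {f : G × G → ℂ}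
    (hf : ∀ g h j : G, χ g * f (h, j) + f (g, h * j) = f (g * h, j) + f (g, h))
    (hf1 : f (1, 1) = 0) (g : G) : f (g, 1) = 0 := by
  have h := hf g 1 1
  simp only [mul_one, one_mul, hf1, mul_zero] at h
  linear_combination -h

instance : Group (ExtG χ f hf hf1) where
  mul x y := ⟨x.a + χ x.g * y.a + f (x.g, y.g), x.g * y.g⟩
  one := ⟨0, 1⟩
  inv x := ⟨-(χ x.g⁻¹ * x.a) - f (x.g⁻¹, x.g), x.g⁻¹⟩
  mul_assoc x y z := by
    refine ExtG.ext ?_ (mul_assoc _ _ _)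
    show x.a + χ x.g * y.a + f (x.g, y.g) + χ (x.g * y.g) * z.a + f (x.g * y.g, z.g)
      = x.a + χ x.g * (y.a + χ y.g * z.a + f (y.g, z.g)) + f (x.g, y.g * z.g)
    rw [map_mul]
    linear_combination -hf x.g y.g z.g
  one_mul x := by
    refine ExtG.ext ?_ (one_mul _)
    show (0:ℂ) + χ 1 * x.a + f (1, x.g) = x.a
    rw [_root_.map_one, f_one_left' hf hf1]
    ring
  mul_one x := by
    refine ExtG.ext ?_ (mul_one _)
    show x.a + χ x.g * 0 + f (x.g, 1) = x.a
    rw [f_one_right' hf hf1]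
    ring
  inv_mul_cancel x := by
    refine ExtG.ext ?_ (inv_mul_cancel _)
    show -(χ x.g⁻¹ * x.a) - f (x.g⁻¹, x.g) + χ x.g⁻¹ * x.a + f (x.g⁻¹, x.g) = 0
    ring

@[simp] lemma mul_a (x y : ExtG χ f hf hf1) :
    (x * y).a = x.a + χ x.g * y.a + f (x.g, y.g) := rfl

@[simp] lemma mul_g (x y : ExtG χ f hf hf1) : (x * y).g = x.g * y.g := rfl

@[simp] lemma one_a : (1 : ExtG χ f hf hf1).a = 0 := rfl

@[simp] lemma one_g : (1 : ExtG χ f hf hf1).g = 1 := rfl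

@[simp] lemma inv_a (x : ExtG χ f hf hf1) :
    x⁻¹.a = -(χ x.g⁻¹ * x.a) - f (x.g⁻¹, x.g) := rfl

@[simp] lemma inv_g (x : ExtG χ f hf hf1) : x⁻¹.g = x.g⁻¹ := rfl

/-- The projection of the extension onto `G`. -/
def proj : ExtG χ f hf hf1 →* G where
  toFun x := x.g
  map_one' := rfl
  map_mul' _ _ := rfl

@[simp] lemma proj_apply (x : ExtG χ f hf hf1) : proj x = x.g := rfl

end ExtG

end Ext

/-! ### Lifting the free group into the extension -/

section Lift

open FreeGroup SemidirectProduct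

variable {m : ℕ} {θ : FreeGroup (Fin m) ≃* FreeGroup (Fin m)} {α : ℂ} {hα : α ≠ 0}
  {f : Gam θ × Gam θ → ℂ}

/-- Lift of the free group into the extension, sending `γ_j` to `(c j, γ_j)`. -/
noncomputable def liftC
    (hf : ∀ g h j : Gam θ, chiM θ α hα g * f (h, j) + f (g, h * j) = f (g * h, j) + f (g, h))
    (hf1 : f (1, 1) = 0) (c : Fin m → ℂ) :
    FreeGroup (Fin m) →* ExtG (chiM θ α hα) f hf hf1 :=
  FreeGroup.lift fun j => ⟨c j, SemidirectProduct.inl (FreeGroup.of j)⟩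

variable {hf : ∀ g h j : Gam θ, chiM θ α hα g * f (h, j) + f (g, h * j) = f (g * h, j) + f (g, h)}
  {hf1 : f (1, 1) = 0}

@[simp] lemma liftC_of (c : Fin m → ℂ) (j : Fin m) :
    liftC hf hf1 c (FreeGroup.of j) = ⟨c j, SemidirectProduct.inl (FreeGroup.of j)⟩ :=
  FreeGroup.lift_apply_of

lemma liftC_g (c : Fin m → ℂ) (w : FreeGroup (Fin m)) :
    (liftC hf hf1 c w).g = SemidirectProduct.inl w := by
  have h : (ExtG.proj).comp (liftC hf hf1 c)
      = (SemidirectProduct.inl : FreeGroup (Fin m) →* Gam θ) :=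
    FreeGroup.ext_hom _ _ fun i => by
      rw [MonoidHom.comp_apply, liftC_of]; rfl
  exact DFunLike.congr_fun h w

lemma expSum_of_sum (i : Fin m) (v : Fin m → ℂ) :
    ∑ j, (expSum (FreeGroup.of i) j : ℂ) * v j = v i := by
  have h : ∀ j, ((expSum (FreeGroup.of i) j : ℂ)) = if i = j then (1:ℂ) else 0 := by
    intro j; rw [expSum_of]; split <;> simp
  simp only [h, ite_mul, one_mul, zero_mul]
  rw [Finset.sum_ite_eq]
  simp

lemma liftC_a (c : Fin m → ℂ) (w : FreeGroup (Fin m)) :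
    (liftC hf hf1 c w).a
      = (∑ j, (expSum w j : ℂ) * c j) + (liftC hf hf1 (fun _ => (0:ℂ)) w).a := by
  induction w using FreeGroup.induction_on with
  | C1 => simp [expSum_one]
  | of i =>
      rw [liftC_of, liftC_of, expSum_of_sum]
      simp
  | inv_of i ih =>
      have hsum : ∑ j, (expSum (FreeGroup.of i)⁻¹ j : ℂ) * c j = - c i := by
        have h0 : ∀ j, (expSum (FreeGroup.of i)⁻¹ j : ℂ) * c j
            = -((expSum (FreeGroup.of i) j : ℂ) * c j) := by
          intro j; rw [expSum_inv]; push_cast; ring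
        rw [Finset.sum_congr rfl (fun j _ => h0 j), Finset.sum_neg_distrib, expSum_of_sum]
      rw [_root_.map_inv, _root_.map_inv, liftC_of, liftC_of, hsum]
      have h1 : ((⟨c i, SemidirectProduct.inl (FreeGroup.of i)⟩ :
          ExtG (chiM θ α hα) f hf hf1)⁻¹).a
          = -(chiM θ α hα ((SemidirectProduct.inl (FreeGroup.of i) : Gam θ))⁻¹ * c i)
            - f ((SemidirectProduct.inl (FreeGroup.of i) : Gam θ)⁻¹,
                SemidirectProduct.inl (FreeGroup.of i)) := rfl
      have h2 : ((⟨(0:ℂ), SemidirectProduct.inl (FreeGroup.of i)⟩ :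
          ExtG (chiM θ α hα) f hf hf1)⁻¹).a
          = -(chiM θ α hα ((SemidirectProduct.inl (FreeGroup.of i) : Gam θ))⁻¹ * 0)
            - f ((SemidirectProduct.inl (FreeGroup.of i) : Gam θ)⁻¹,
                SemidirectProduct.inl (FreeGroup.of i)) := rfl
      rw [h1, h2, ← _root_.map_inv (SemidirectProduct.inl :
        FreeGroup (Fin m) →* Gam θ), chiM_inl]
      ring
  | mul u v ihu ihv =>
      have hsum : ∑ j, (expSum (u * v) j : ℂ) * c j
          = (∑ j, (expSum u j : ℂ) * c j) + ∑ j, (expSum v j : ℂ) * c j := by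
        rw [← Finset.sum_add_distrib]
        refine Finset.sum_congr rfl fun j _ => ?_
        rw [expSum_mul]; push_cast; ring
      rw [_root_.map_mul, _root_.map_mul, ExtG.mul_a, ExtG.mul_a]
      simp only [liftC_g, chiM_inl]
      rw [hsum, ihu, ihv]
      ring

end Lift

/-! ### Vanishing of `H²` -/

open FreeGroup SemidirectProduct groupCohomology in
lemma twoCoboundaries_eq_top (m : ℕ) (θ : FreeGroup (Fin m) ≃* FreeGroup (Fin m))
    (α : ℂ) (hα : α ≠ 0) (π : Representation ℂ (Gam θ) ℂ)
    (hπ : ∀ (g : Gam θ) (x : ℂ), π g x = α ^ psi g * x)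
    (hsol : ∀ b : Fin m → ℂ, ∃ c : Fin m → ℂ,
      ∀ i, α * c i - (∑ j, (expSum (θ (FreeGroup.of i)) j : ℂ) * c j) = b i) :
    ∀ F : groupCohomology.cocycles₂ (Rep.of π), ⇑F ∈ groupCohomology.coboundaries₂ (Rep.of π) := by
  intro F
  have hρ : ∀ (g : Gam θ) (x : ℂ), (Rep.of π).ρ g x = chiM θ α hα g * x := fun g x => hπ g x
  have hco := (groupCohomology.mem_cocycles₂_iff (A := Rep.of π) F.1).1 F.2
  set b0 : ℂ := show ℂ from F (1, 1) with hb0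
  set f : Gam θ × Gam θ → ℂ :=
    fun p => (show ℂ from F p) - chiM θ α hα p.1 * b0 with hfdef
  have hfeq : ∀ g h : Gam θ,
      f (g, h) = (show ℂ from F (g, h)) - chiM θ α hα g * b0 := fun g h => rfl
  have hf : ∀ g h j : Gam θ,
      chiM θ α hα g * f (h, j) + f (g, h * j) = f (g * h, j) + f (g, h) := by
    intro g h j
    have h1 := hco g h j
    rw [hρ] at h1
    have h1' : (show ℂ from F (g * h, j)) + (show ℂ from F (g, h))
        = chiM θ α hα g * (show ℂ from F (h, j)) + (show ℂ from F (g, h * j)) := h1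
    simp only [hfeq]
    rw [_root_.map_mul]
    linear_combination -h1'
  have hf1 : f (1, 1) = 0 := by
    rw [hfeq, _root_.map_one]; ring
  set t : Gam θ := SemidirectProduct.inr (Multiplicative.ofAdd 1) with htdef
  obtain ⟨c, hc⟩ := hsol (fun i =>
    (liftC hf hf1 (fun _ => (0:ℂ)) (θ (FreeGroup.of i))).a
      - (f (t, SemidirectProduct.inl (FreeGroup.of i)) - α * f (t⁻¹, t)
        + f (t * SemidirectProduct.inl (FreeGroup.of i), t⁻¹)))
  set T : ExtG (chiM θ α hα) f hf hf1 := ⟨0, t⟩ with hTdef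
  have hχt : chiM θ α hα t = α := by
    rw [chiM_apply, psi_inr, toAdd_ofAdd, zpow_one]
  have hχtg : ∀ u : FreeGroup (Fin m),
      chiM θ α hα (t * SemidirectProduct.inl u) = α := by
    intro u
    rw [chiM_apply, psi_mul, psi_inr, psi_inl, toAdd_ofAdd, add_zero, zpow_one]
  have hconj1 : ∀ i, liftC hf hf1 c (θ (FreeGroup.of i))
      = T * liftC hf hf1 c (FreeGroup.of i) * T⁻¹ := by
    intro i
    refine ExtG.ext ?_ ?_
    · rw [liftC_a, liftC_of]
      simp only [ExtG.mul_a, ExtG.mul_g, ExtG.inv_a, ExtG.inv_g, hTdef]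
      show (∑ j, (expSum (θ (FreeGroup.of i)) j : ℂ) * c j)
          + (liftC hf hf1 (fun _ => (0:ℂ)) (θ (FreeGroup.of i))).a
        = 0 + chiM θ α hα t * c i + f (t, SemidirectProduct.inl (FreeGroup.of i))
          + chiM θ α hα (t * SemidirectProduct.inl (FreeGroup.of i))
            * (-(chiM θ α hα t⁻¹ * 0) - f (t⁻¹, t))
          + f (t * SemidirectProduct.inl (FreeGroup.of i), t⁻¹)
      rw [hχt, hχtg]
      linear_combination - hc i
    · rw [liftC_g]
      simp only [ExtG.mul_g, ExtG.inv_g, hTdef, liftC_of]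
      show SemidirectProduct.inl (θ (FreeGroup.of i))
        = t * SemidirectProduct.inl (FreeGroup.of i) * t⁻¹
      have h := SemidirectProduct.inl_aut
        (φ := zpowersHom (MulAut (FreeGroup (Fin m))) θ)
        (Multiplicative.ofAdd (1:ℤ)) (FreeGroup.of i)
      rw [zpowersHom_apply, toAdd_ofAdd, zpow_one] at h
      rw [htdef, h, _root_.map_inv]
  have hconj : ∀ w, liftC hf hf1 c (θ w) = T * liftC hf hf1 c w * T⁻¹ := by
    intro w
    have h := FreeGroup.ext_hom ((liftC hf hf1 c).comp θ.toMonoidHom)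
      ((MulAut.conj T).toMonoidHom.comp (liftC hf hf1 c)) (fun i => by
        simp only [MonoidHom.comp_apply, MulEquiv.coe_toMonoidHom, MulAut.conj_apply]
        exact hconj1 i)
    have h2 := DFunLike.congr_fun h w
    simpa only [MonoidHom.comp_apply, MulEquiv.coe_toMonoidHom, MulAut.conj_apply] using h2
  have hconjinv : ∀ w, liftC hf hf1 c (θ.symm w) = T⁻¹ * liftC hf hf1 c w * T := by
    intro w
    have h := hconj (θ.symm w)
    rw [MulEquiv.apply_symm_apply] at h
    rw [h]; group
  have hconjn : ∀ (n : ℤ) (w : FreeGroup (Fin m)),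
      liftC hf hf1 c ((θ ^ n : MulAut (FreeGroup (Fin m))) w)
        = T ^ n * liftC hf hf1 c w * (T ^ n)⁻¹ := by
    intro n
    induction n using Int.induction_on with
    | zero => intro w; simp
    | succ k ih =>
        intro w
        have h1 : ((θ ^ ((k:ℤ)+1) : MulAut (FreeGroup (Fin m)))) w
            = (θ ^ (k:ℤ) : MulAut (FreeGroup (Fin m))) (θ w) := by
          rw [zpow_add_one]; rfl
        rw [h1, ih, hconj, zpow_add_one]
        group
    | pred k ih =>
        intro w
        have h1 : ((θ ^ (-(k:ℤ)-1) : MulAut (FreeGroup (Fin m)))) w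
            = (θ ^ (-(k:ℤ)) : MulAut (FreeGroup (Fin m))) (θ.symm w) := by
          rw [zpow_sub_one]; rfl
        rw [h1, ih, hconjinv, zpow_sub_one]
        group
  have hcompat : ∀ z : Multiplicative ℤ,
      (liftC hf hf1 c).comp
          ((zpowersHom (MulAut (FreeGroup (Fin m))) θ z)).toMonoidHom
        = (MulAut.conj ((zpowersHom (ExtG (chiM θ α hα) f hf hf1) T) z)).toMonoidHom.comp
            (liftC hf hf1 c) := by
    intro z
    refine MonoidHom.ext fun w => ?_
    simp only [MonoidHom.comp_apply, MulEquiv.coe_toMonoidHom, MulAut.conj_apply,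
      zpowersHom_apply]
    exact hconjn (Multiplicative.toAdd z) w
  obtain ⟨σ, hσinl, hσinr⟩ : ∃ σ : Gam θ →* ExtG (chiM θ α hα) f hf hf1,
      (∀ u, σ (SemidirectProduct.inl u) = liftC hf hf1 c u)
        ∧ (∀ z, σ (SemidirectProduct.inr z) = T ^ Multiplicative.toAdd z) :=
    ⟨SemidirectProduct.lift (liftC hf hf1 c) (zpowersHom _ T) hcompat,
      fun u => SemidirectProduct.lift_inl _ _ _ u,
      fun z => SemidirectProduct.lift_inr _ _ _ z⟩
  have hsec : ∀ x : Gam θ, (σ x).g = x := by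
    have h : (ExtG.proj).comp σ = MonoidHom.id (Gam θ) := by
      apply SemidirectProduct.hom_ext
      · refine FreeGroup.ext_hom _ _ fun i => ?_
        simp only [MonoidHom.comp_apply, MonoidHom.id_apply, hσinl, liftC_of]
        rfl
      · refine MonoidHom.ext_mint ?_
        simp only [MonoidHom.comp_apply, MonoidHom.id_apply, hσinr, toAdd_ofAdd, zpow_one]
        rfl
    intro x
    exact DFunLike.congr_fun h x
  refine ⟨fun x => b0 - (σ x).a, ?_⟩
  funext p
  rw [groupCohomology.d₁₂_hom_apply, hρ]
  have hmul : (σ (p.1 * p.2)).a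
      = (σ p.1).a + chiM θ α hα p.1 * (σ p.2).a + f (p.1, p.2) := by
    rw [_root_.map_mul, ExtG.mul_a, hsec, hsec]
  have hfp : f (p.1, p.2) = (show ℂ from F (p.1, p.2)) - chiM θ α hα p.1 * b0 := rfl
  have hFp : (show ℂ from F p) = (show ℂ from F (p.1, p.2)) := by rw [Prod.mk.eta]
  show chiM θ α hα p.1 * (b0 - (σ p.2).a) - (b0 - (σ (p.1 * p.2)).a) + (b0 - (σ p.1).a)
    = show ℂ from F p
  rw [hmul, hFp]
  linear_combination hfp

/-! ### Vanishing of `H¹` -/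

open FreeGroup SemidirectProduct groupCohomology in
lemma oneCoboundaries_eq_top (m : ℕ) (θ : FreeGroup (Fin m) ≃* FreeGroup (Fin m))
    (α : ℂ) (hα : α ≠ 0) (hα1 : α ≠ 1) (π : Representation ℂ (Gam θ) ℂ)
    (hπ : ∀ (g : Gam θ) (x : ℂ), π g x = α ^ psi g * x)
    (hinj : ∀ v : Fin m → ℂ,
      (∀ i, α * v i = ∑ j, (expSum (θ (FreeGroup.of i)) j : ℂ) * v j) → v = 0) :
    ∀ F : groupCohomology.cocycles₁ (Rep.of π), ⇑F ∈ groupCohomology.coboundaries₁ (Rep.of π) := by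
  intro F
  have hρ : ∀ (g : Gam θ) (x : ℂ), (Rep.of π).ρ g x = α ^ psi g * x := fun g x => hπ g x
  set Fc : Gam θ → ℂ := F.1 with hFc
  have hco : ∀ g h : Gam θ, Fc (g * h) = α ^ psi g * Fc h + Fc g := by
    intro g h
    have h1 := (groupCohomology.mem_cocycles₁_iff (A := Rep.of π) F.1).1 F.2 g h
    rw [hρ] at h1
    exact h1
  have hone : Fc 1 = 0 := groupCohomology.cocycles₁_map_one F
  set t : Gam θ := SemidirectProduct.inr (Multiplicative.ofAdd 1) with htdef
  have hψt : psi t = 1 := by rw [htdef, psi_inr, toAdd_ofAdd]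
  have htinv : α * Fc t⁻¹ + Fc t = 0 := by
    have h := hco t t⁻¹
    rw [mul_inv_cancel, hone, hψt, zpow_one] at h
    linear_combination -h
  -- the restriction of `F` to the free group is a homomorphism
  set φf : FreeGroup (Fin m) →* Multiplicative ℂ :=
    { toFun := fun w => Multiplicative.ofAdd (Fc (SemidirectProduct.inl w))
      map_one' := by
        show Multiplicative.ofAdd (Fc (SemidirectProduct.inl (1 : FreeGroup (Fin m)))) = 1
        rw [_root_.map_one, hone]
        rfl
      map_mul' := by
        intro u v
        show Multiplicative.ofAdd (Fc (SemidirectProduct.inl (u * v)))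
          = Multiplicative.ofAdd (Fc (SemidirectProduct.inl u))
            * Multiplicative.ofAdd (Fc (SemidirectProduct.inl v))
        rw [_root_.map_mul, ← ofAdd_add]
        congr 1
        rw [hco (SemidirectProduct.inl u) (SemidirectProduct.inl v), psi_inl, zpow_zero]
        ring } with hφf
  have hφval : ∀ w : FreeGroup (Fin m),
      Multiplicative.toAdd (φf w) = Fc (SemidirectProduct.inl w) := fun w => rfl
  have hsumval : ∀ w : FreeGroup (Fin m), Fc (SemidirectProduct.inl w)
      = ∑ j, (expSum w j : ℂ) * Fc (SemidirectProduct.inl (FreeGroup.of j)) := by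
    intro w
    have hsum := hom_eq_expSum_sum φf w
    simp only [hφval] at hsum
    exact hsum
  have hv0 : (fun j => Fc (SemidirectProduct.inl (FreeGroup.of j))) = 0 := by
    apply hinj
    intro i
    have haut : SemidirectProduct.inl (θ (FreeGroup.of i))
        = t * SemidirectProduct.inl (FreeGroup.of i) * t⁻¹ := by
      have h := SemidirectProduct.inl_aut
        (φ := zpowersHom (MulAut (FreeGroup (Fin m))) θ)
        (Multiplicative.ofAdd (1:ℤ)) (FreeGroup.of i)
      rw [zpowersHom_apply, toAdd_ofAdd, zpow_one] at h
      rw [htdef, h, _root_.map_inv]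
    have hmid : Fc (SemidirectProduct.inl (FreeGroup.of i) * t⁻¹)
        = Fc t⁻¹ + Fc (SemidirectProduct.inl (FreeGroup.of i)) := by
      have h := hco (SemidirectProduct.inl (FreeGroup.of i)) t⁻¹
      rw [psi_inl, zpow_zero] at h
      linear_combination h
    have hout : Fc (SemidirectProduct.inl (θ (FreeGroup.of i)))
        = α * Fc (SemidirectProduct.inl (FreeGroup.of i)) := by
      rw [haut, mul_assoc]
      have h := hco t (SemidirectProduct.inl (FreeGroup.of i) * t⁻¹)
      rw [hψt, zpow_one, hmid] at h
      rw [h]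
      linear_combination htinv
    have hsum := hsumval (θ (FreeGroup.of i))
    rw [hout] at hsum
    exact hsum
  have hFinl : ∀ w : FreeGroup (Fin m), Fc (SemidirectProduct.inl w) = 0 := by
    intro w
    rw [hsumval w]
    have : ∀ j : Fin m, Fc (SemidirectProduct.inl (FreeGroup.of j)) = 0 :=
      fun j => congrFun hv0 j
    simp [this]
  -- value on powers of `t`
  have hpow : ∀ n : ℤ,
      (α - 1) * Fc (SemidirectProduct.inr (Multiplicative.ofAdd n))
        = (α ^ n - 1) * Fc t := by
    have htinv' : t⁻¹ = SemidirectProduct.inr (Multiplicative.ofAdd (-1 : ℤ)) := by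
      rw [htdef, ← _root_.map_inv]; rfl
    intro n
    induction n using Int.induction_on with
    | zero =>
        rw [show Multiplicative.ofAdd (0:ℤ) = 1 from rfl, _root_.map_one, hone]
        simp
    | succ k ih =>
        have hsplit : (Multiplicative.ofAdd ((k:ℤ)+1))
            = Multiplicative.ofAdd (k:ℤ) * Multiplicative.ofAdd (1:ℤ) := by
          rw [← ofAdd_add]
        have h := hco (SemidirectProduct.inr (Multiplicative.ofAdd (k:ℤ))) t
        rw [psi_inr, toAdd_ofAdd] at h
        have hz1 : (α:ℂ) ^ ((k:ℤ)+1) = α ^ (k:ℤ) * α := zpow_add_one₀ hα (k:ℤ)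
        rw [hsplit, _root_.map_mul, ← htdef, h, hz1]
        linear_combination ih
    | pred k ih =>
        have hsplit : (Multiplicative.ofAdd (-(k:ℤ)-1))
            = Multiplicative.ofAdd (-(k:ℤ)) * Multiplicative.ofAdd (-1:ℤ) := by
          rw [← ofAdd_add, sub_eq_add_neg]
        have h := hco (SemidirectProduct.inr (Multiplicative.ofAdd (-(k:ℤ)))) t⁻¹
        rw [psi_inr, toAdd_ofAdd] at h
        have hz1 : (α:ℂ) ^ (-(k:ℤ)) = α ^ (-(k:ℤ)-1) * α := by
          rw [← zpow_add_one₀ hα]; ring_nf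
        rw [hsplit, _root_.map_mul, ← htinv', h]
        -- goal : (α-1) * (α^(-k) * Fc t⁻¹ + Fc (inr (ofAdd (-k)))) = (α^(-k-1)-1) * Fc t
        linear_combination ih + (α ^ (-(k:ℤ)-1)) * (α - 1) * htinv
          + ((α - 1) * Fc t⁻¹ + Fc t) * hz1
  -- general value
  have hval : ∀ x : Gam θ, (α - 1) * Fc x = (α ^ psi x - 1) * Fc t := by
    intro x
    have hx : x = SemidirectProduct.inl x.left * SemidirectProduct.inr x.right :=
      (SemidirectProduct.inl_left_mul_inr_right x).symm
    have h := hco (SemidirectProduct.inl x.left) (SemidirectProduct.inr x.right)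
    rw [← hx, psi_inl, zpow_zero, hFinl] at h
    have hψ : psi x = Multiplicative.toAdd x.right := rfl
    have h2 := hpow (Multiplicative.toAdd x.right)
    rw [show Multiplicative.ofAdd (Multiplicative.toAdd x.right) = x.right from rfl] at h2
    rw [hψ, h]
    linear_combination h2
  -- conclude: `F` is the coboundary of `F t / (α - 1)`
  refine ⟨Fc t / (α - 1), ?_⟩
  funext x
  rw [groupCohomology.d₀₁_hom_apply, hρ]
  have hne : α - 1 ≠ 0 := sub_ne_zero.mpr hα1
  show α ^ psi x * (Fc t / (α - 1)) - Fc t / (α - 1) = Fc x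
  field_simp
  linear_combination -hval x

/-! ### Main theorem -/

/-- Let `α ∈ ℂ*`, and let `ℂ_α` be the one-dimensional `Γ`-module on which `γ` acts by
multiplication by `α^(ψ γ)`.  If `α ≠ 1` then `H⁰(Γ; ℂ_α) = 0`; if in addition `α` is
not a root of the characteristic polynomial of `M`, then `H¹(Γ; ℂ_α) = 0` and
`H²(Γ; ℂ_α) = 0`. -/
theorem cohomology_C_alpha_vanishing (m : ℕ) (hm : 1 ≤ m)
    (θ : FreeGroup (Fin m) ≃* FreeGroup (Fin m)) (α : ℂ) (hα : α ≠ 0)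
    (π : Representation ℂ (Gam θ) ℂ)
    (hπ : ∀ (g : Gam θ) (x : ℂ), π g x = α ^ psi g * x) :
    (α ≠ 1 → Subsingleton (groupCohomology (Rep.of π) 0)) ∧
    (α ≠ 1 → ¬ ((abMatrix θ).map (Int.cast : ℤ → ℂ)).charpoly.IsRoot α →
      Subsingleton (groupCohomology (Rep.of π) 1) ∧
        Subsingleton (groupCohomology (Rep.of π) 2)) := by
  constructor
  · -- `H⁰`
    intro hα1
    have hzero : ∀ z : ℂ, (∀ g : Gam θ, π g z = z) → z = 0 := by
      intro z hz
      set tG : Gam θ := SemidirectProduct.inr (Multiplicative.ofAdd 1) with htG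
      have h1 : α * z = z := by
        have h2 := hπ tG z
        rw [htG, psi_inr, toAdd_ofAdd, zpow_one] at h2
        rw [← h2]
        exact hz tG
      have h3 : (α - 1) * z = 0 := by linear_combination h1
      rcases mul_eq_zero.1 h3 with h' | h'
      · exact absurd (by linear_combination h' : α = 1) hα1
      · exact h'
    haveI hs : Subsingleton (Rep.of π).ρ.invariants := by
      constructor
      intro a b
      refine Subtype.ext ?_
      have ha : (a.1 : ℂ) = 0 := hzero a.1 (fun g => a.2 g)
      have hb : (b.1 : ℂ) = 0 := hzero b.1 (fun g => b.2 g)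
      exact ha.trans hb.symm
    haveI : Subsingleton (ModuleCat.of ℂ (Rep.of π).ρ.invariants) := hs
    exact Equiv.subsingleton
      ((groupCohomology.H0Iso (Rep.of π)).toLinearEquiv.toEquiv)
  · -- `H¹` and `H²`
    intro hα1 hroot
    set Mc : Matrix (Fin m) (Fin m) ℂ := (abMatrix θ).map (Int.cast : ℤ → ℂ) with hMc
    set N : Matrix (Fin m) (Fin m) ℂ := α • (1 : Matrix (Fin m) (Fin m) ℂ) - Mc with hN
    have hcharval : Polynomial.eval α Mc.charpoly = N.det := by
      rw [Matrix.charpoly, ← Polynomial.coe_evalRingHom, RingHom.map_det]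
      congr 1
      ext i j
      rw [show ((Polynomial.evalRingHom α).mapMatrix Mc.charmatrix) i j
        = Polynomial.eval α (Mc.charmatrix i j) from rfl]
      by_cases h : i = j
      · subst h
        rw [Matrix.charmatrix_apply_eq, hN]
        simp [Matrix.sub_apply, Matrix.smul_apply, Matrix.one_apply_eq, smul_eq_mul]
      · rw [Matrix.charmatrix_apply_ne _ _ _ h, hN]
        simp [Matrix.sub_apply, Matrix.smul_apply, Matrix.one_apply_ne h, smul_eq_mul]
    have hdet : N.det ≠ 0 := by
      intro h0
      exact hroot (show Mc.charpoly.eval α = 0 by rw [hcharval]; exact h0)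
    have hdetU : IsUnit N.det := hdet.isUnit
    have hNmv : ∀ (v : Fin m → ℂ) (i : Fin m), (N.mulVec v) i
        = α * v i - ∑ j, (expSum (θ (FreeGroup.of i)) j : ℂ) * v j := by
      intro v i
      have h1 : (N.mulVec v) i = ∑ j, N i j * v j := by
        simp [Matrix.mulVec, dotProduct]
      have h2 : ∀ j, N i j * v j
          = (if i = j then α * v j else 0)
            - (expSum (θ (FreeGroup.of i)) j : ℂ) * v j := by
        intro j
        rw [hN, Matrix.sub_apply, Matrix.smul_apply, Matrix.one_apply, hMc, Matrix.map_apply]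
        rw [show abMatrix θ i j = expSum (θ (FreeGroup.of i)) j from rfl]
        by_cases h : i = j
        · simp only [h, if_true, smul_eq_mul]; push_cast; ring
        · simp only [h, if_false, smul_eq_mul]; push_cast; ring
      rw [h1, Finset.sum_congr rfl fun j _ => h2 j, Finset.sum_sub_distrib,
        Finset.sum_ite_eq]
      simp
    have hsol : ∀ b : Fin m → ℂ, ∃ c : Fin m → ℂ,
        ∀ i, α * c i - (∑ j, (expSum (θ (FreeGroup.of i)) j : ℂ) * c j) = b i := by
      intro b
      refine ⟨N⁻¹.mulVec b, fun i => ?_⟩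
      have h : N.mulVec (N⁻¹.mulVec b) = b := by
        rw [Matrix.mulVec_mulVec, Matrix.mul_nonsing_inv _ hdetU, Matrix.one_mulVec]
      rw [← hNmv (N⁻¹.mulVec b) i, h]
    have hinj : ∀ v : Fin m → ℂ,
        (∀ i, α * v i = ∑ j, (expSum (θ (FreeGroup.of i)) j : ℂ) * v j) → v = 0 := by
      intro v hv
      have hzero : N.mulVec v = 0 := by
        funext i
        rw [hNmv, Pi.zero_apply]
        linear_combination hv i
      have h := congrArg (fun w => N⁻¹.mulVec w) hzero
      simpa [Matrix.mulVec_mulVec, Matrix.nonsing_inv_mul _ hdetU, Matrix.one_mulVec,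
        Matrix.mulVec_zero] using h
    constructor
    · refine ⟨fun a b => ?_⟩
      have h0 : ∀ x : groupCohomology.H1 (Rep.of π), x = 0 := fun x =>
        groupCohomology.H1_induction_on x fun y =>
          (groupCohomology.H1π_eq_zero_iff y).2 (oneCoboundaries_eq_top m θ α hα hα1 π hπ hinj y)
      rw [h0 a, h0 b]
    · refine ⟨fun a b => ?_⟩
      have h0 : ∀ x : groupCohomology.H2 (Rep.of π), x = 0 := fun x =>
        groupCohomology.H2_induction_on x fun y =>
          (groupCohomology.H2π_eq_zero_iff y).2 (twoCoboundaries_eq_top m θ α hα π hπ hsol y)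
      rw [h0 a, h0 b]
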